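/- Let G be a k-partite graph (vertex set partitioned into k parts with all edges between distinct parts) with e edges. Then the number of copies of K_k in G (cliques with one vertex in each part) is at most (e / C(k,2))^{k/2}. -/

import Mathlib

open Finset

/-- Generalized Hölder: sum of geometric means ≤ geometric mean of sums. -/
lemma gen_holder {α ι : Type*} (A : Finset α) (I : Finset ι) (hI : I.Nonempty)
    (g : ι → α → ℝ) (hg : ∀ i ∈ I, ∀ a ∈ A, 0 ≤ g i a) :
    ∑ a ∈ A, ∏ i ∈ I, g i a ^ ((I.card : ℝ)⁻¹) ≤
      ∏ i ∈ I, (∑ a ∈ A, g i a) ^ ((I.card : ℝ)⁻¹) := by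
  have hn0 : (0:ℝ) < (I.card : ℝ) := by exact_mod_cast hI.card_pos
  by_cases h0 : ∃ i ∈ I, ∑ a ∈ A, g i a = 0
  · obtain ⟨i, hi, hzero⟩ := h0
    have hga : ∀ a ∈ A, g i a = 0 :=
      (Finset.sum_eq_zero_iff_of_nonneg (fun a ha => hg i hi a ha)).1 hzero
    have hL : ∑ a ∈ A, ∏ j ∈ I, g j a ^ ((I.card : ℝ)⁻¹) = 0 := by
      refine Finset.sum_eq_zero fun a ha => ?_
      refine Finset.prod_eq_zero hi ?_
      rw [hga a ha, Real.zero_rpow (by positivity)]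
    rw [hL]
    exact Finset.prod_nonneg fun j hj =>
      Real.rpow_nonneg (Finset.sum_nonneg fun a ha => hg j hj a ha) _
  · push_neg at h0
    have hGpos : ∀ i ∈ I, 0 < ∑ a ∈ A, g i a := fun i hi =>
      lt_of_le_of_ne (Finset.sum_nonneg fun a ha => hg i hi a ha) (Ne.symm (h0 i hi))
    set G : ι → ℝ := fun i => ∑ a ∈ A, g i a with hG
    have key : ∀ a ∈ A, ∏ i ∈ I, g i a ^ ((I.card : ℝ)⁻¹) ≤
        (∏ i ∈ I, (G i) ^ ((I.card : ℝ)⁻¹)) * ∑ i ∈ I, (I.card : ℝ)⁻¹ * (g i a / G i) := by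
      intro a ha
      have h1 : ∏ i ∈ I, g i a ^ ((I.card : ℝ)⁻¹) =
          (∏ i ∈ I, (G i) ^ ((I.card : ℝ)⁻¹)) * ∏ i ∈ I, (g i a / G i) ^ ((I.card : ℝ)⁻¹) := by
        rw [← Finset.prod_mul_distrib]
        refine Finset.prod_congr rfl fun i hi => ?_
        rw [← Real.mul_rpow (le_of_lt (hGpos i hi))
          (div_nonneg (hg i hi a ha) (le_of_lt (hGpos i hi)))]
        rw [mul_div_cancel₀ _ (ne_of_gt (hGpos i hi))]
      rw [h1]
      refine mul_le_mul_of_nonneg_left ?_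
        (Finset.prod_nonneg fun i hi => Real.rpow_nonneg (le_of_lt (hGpos i hi)) _)
      exact Real.geom_mean_le_arith_mean_weighted I (fun _ => (I.card : ℝ)⁻¹)
        (fun i => g i a / G i) (fun i _ => by positivity)
        (by rw [Finset.sum_const, nsmul_eq_mul, mul_inv_cancel₀ (ne_of_gt hn0)])
        (fun i hi => div_nonneg (hg i hi a ha) (le_of_lt (hGpos i hi)))
    calc ∑ a ∈ A, ∏ i ∈ I, g i a ^ ((I.card : ℝ)⁻¹)
        ≤ ∑ a ∈ A, (∏ i ∈ I, (G i) ^ ((I.card : ℝ)⁻¹)) *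
            ∑ i ∈ I, (I.card : ℝ)⁻¹ * (g i a / G i) := Finset.sum_le_sum key
      _ = ∏ i ∈ I, (G i) ^ ((I.card : ℝ)⁻¹) := by
          rw [← Finset.mul_sum, Finset.sum_comm]
          have : ∑ i ∈ I, ∑ a ∈ A, (I.card : ℝ)⁻¹ * (g i a / G i) = 1 := by
            have : ∀ i ∈ I, ∑ a ∈ A, (I.card : ℝ)⁻¹ * (g i a / G i) = (I.card : ℝ)⁻¹ := by
              intro i hi
              rw [← Finset.mul_sum, ← Finset.sum_div, div_self (ne_of_gt (hGpos i hi)), mul_one]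
            rw [Finset.sum_congr rfl this, Finset.sum_const, nsmul_eq_mul,
              mul_inv_cancel₀ (ne_of_gt hn0)]
          rw [this, mul_one]

def PP (k : ℕ) : Finset (Fin k × Fin k) := Finset.univ.filter (fun ij => ij.1 < ij.2)

lemma PP_succ (k : ℕ) :
    PP (k+1) = ((PP k).image (fun ij => (ij.1.castSucc, ij.2.castSucc))) ∪
      ((Finset.univ : Finset (Fin k)).image (fun i => (i.castSucc, Fin.last k))) := by
  ext ⟨i, j⟩
  simp only [PP, Finset.mem_filter, Finset.mem_univ, true_and, Finset.mem_union,
    Finset.mem_image, Prod.mk.injEq]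
  constructor
  · intro hij
    by_cases hj : j = Fin.last k
    · subst hj
      have hi : i ≠ Fin.last k := ne_of_lt hij
      exact Or.inr ⟨i.castPred hi, Fin.castSucc_castPred i hi, rfl⟩
    · have hi : i ≠ Fin.last k := ne_of_lt (lt_of_lt_of_le hij (Fin.le_last j))
      refine Or.inl ⟨(i.castPred hi, j.castPred hj), ?_,
        Fin.castSucc_castPred i hi, Fin.castSucc_castPred j hj⟩
      have : (i.castPred hi).castSucc < (j.castPred hj).castSucc := by
        rwa [Fin.castSucc_castPred, Fin.castSucc_castPred]
      exact Fin.castSucc_lt_castSucc_iff.mp this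
  · rintro (⟨⟨a, b⟩, hab, h1, h2⟩ | ⟨a, h1, h2⟩)
    · rw [← h1, ← h2]; exact Fin.castSucc_lt_castSucc_iff.mpr hab
    · rw [← h1, ← h2]; exact Fin.castSucc_lt_last a

lemma PP_succ_disj (k : ℕ) :
    Disjoint ((PP k).image (fun ij => (ij.1.castSucc, ij.2.castSucc)))
      ((Finset.univ : Finset (Fin k)).image (fun i => (i.castSucc, Fin.last k))) := by
  rw [Finset.disjoint_left]
  rintro ⟨i, j⟩ h1 h2
  simp only [Finset.mem_image, Prod.mk.injEq] at h1 h2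
  obtain ⟨⟨a, b⟩, _, _, h1b⟩ := h1
  obtain ⟨c, _, _, h2b⟩ := h2
  exact absurd (h1b.trans h2b.symm) (Fin.castSucc_lt_last b).ne

lemma PP_card (k : ℕ) : (PP k).card = k.choose 2 := by
  induction k with
  | zero => decide
  | succ k ih =>
    rw [PP_succ, Finset.card_union_of_disjoint (PP_succ_disj k),
      Finset.card_image_of_injective _ (fun a b h => by
        simpa [Prod.ext_iff, Fin.castSucc_inj] using h),
      Finset.card_image_of_injective _ (fun a b h => by
        simpa [Prod.ext_iff, Fin.castSucc_inj] using h),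
      ih, Finset.card_univ, Fintype.card_fin, Nat.choose]
    simp [Nat.choose_one_right, Nat.add_comm]

lemma box_step {V : Type*} [DecidableEq V] (k : ℕ) (hk : 0 < k)
    (ih : ∀ S : Finset (Fin k → V),
      S.card ^ (k - 1) ≤ ∏ ij ∈ PP k, (S.image fun f => (f ij.1, f ij.2)).card)
    (S : Finset (Fin (k+1) → V)) :
    S.card ^ k ≤ ∏ ij ∈ PP (k+1), (S.image fun f => (f ij.1, f ij.2)).card := by
  classical
  set A : Finset V := S.image (fun f => f (Fin.last k)) with hA
  set Fa : V → Finset (Fin (k+1) → V) :=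
    fun a => S.filter (fun f => f (Fin.last k) = a) with hFa
  set T : V → Finset (Fin k → V) := fun a => (Fa a).image Fin.init with hT
  -- (F1)
  have F1 : S.card = ∑ a ∈ A, (Fa a).card :=
    Finset.card_eq_sum_card_fiberwise (fun f hf => Finset.mem_image_of_mem _ hf)
  -- (F2)
  have F2 : ∀ a, (T a).card = (Fa a).card := by
    intro a
    refine Finset.card_image_of_injOn ?_
    intro f hf g hg hfg
    simp only [hFa, Finset.coe_filter, Set.mem_setOf_eq] at hf hg
    calc f = Fin.snoc (Fin.init f) (f (Fin.last k)) := (Fin.snoc_init_self f).symm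
      _ = Fin.snoc (Fin.init g) (g (Fin.last k)) := by rw [hfg, hf.2, hg.2]
      _ = g := Fin.snoc_init_self g
  -- image of T under pair/single maps
  have Timg2 : ∀ a (i j : Fin k),
      (T a).image (fun g => (g i, g j)) = (Fa a).image (fun f => (f i.castSucc, f j.castSucc)) := by
    intro a i j
    rw [hT, Finset.image_image]
    rfl
  have Timg1 : ∀ a (i : Fin k),
      (T a).image (fun g => g i) = (Fa a).image (fun f => f i.castSucc) := by
    intro a i
    rw [hT, Finset.image_image]
    rfl
  set d : Fin k → V → ℕ := fun i a => ((Fa a).image (fun f => f i.castSucc)).card with hd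
  set e : Fin k → ℕ :=
    fun i => (S.image (fun f => (f i.castSucc, f (Fin.last k)))).card with he
  set E : ℕ := ∏ ij ∈ PP k,
    (S.image (fun f => (f ij.1.castSucc, f ij.2.castSucc))).card with hE
  -- (F3)
  have F3 : ∀ a ∈ A, (Fa a).card ^ (k - 1) ≤ E := by
    intro a _
    rw [← F2]
    refine le_trans (ih (T a)) (Finset.prod_le_prod (fun _ _ => Nat.zero_le _) ?_)
    intro ij hij
    rw [Timg2]
    exact Finset.card_le_card (Finset.image_subset_image (Finset.filter_subset _ _))
  -- (F4)
  have F4 : ∀ a ∈ A, (Fa a).card ≤ ∏ i : Fin k, d i a := by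
    intro a ha
    rw [← F2]
    have hsub : T a ⊆ Fintype.piFinset (fun i => (T a).image (fun g => g i)) := by
      intro g hg
      rw [Fintype.mem_piFinset]
      exact fun i => Finset.mem_image_of_mem _ hg
    refine le_trans (Finset.card_le_card hsub) ?_
    rw [Fintype.card_piFinset]
    exact le_of_eq (Finset.prod_congr rfl fun i _ => by rw [Timg1])
  -- (F5)
  have F5 : ∀ i : Fin k, ∑ a ∈ A, d i a = e i := by
    intro i
    have key : S.image (fun f => (f i.castSucc, f (Fin.last k)))
        = A.biUnion (fun a => (Fa a).image (fun f => (f i.castSucc, f (Fin.last k)))) := by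
      ext x
      simp only [Finset.mem_image, Finset.mem_biUnion, hA, hFa, Finset.mem_filter]
      constructor
      · rintro ⟨f, hf, rfl⟩
        exact ⟨f (Fin.last k), ⟨f, hf, rfl⟩, f, ⟨hf, rfl⟩, rfl⟩
      · rintro ⟨a, -, f, ⟨hf, -⟩, rfl⟩
        exact ⟨f, hf, rfl⟩
    have himg : ∀ a, (Fa a).image (fun f => (f i.castSucc, f (Fin.last k)))
        = ((Fa a).image (fun f => f i.castSucc)).image (fun x => (x, a)) := by
      intro a
      rw [Finset.image_image]
      refine Finset.image_congr ?_
      intro f hf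
      rw [hFa, Finset.mem_coe, Finset.mem_filter] at hf
      simp [hf.2]
    simp only [he, hd]
    rw [key, Finset.card_biUnion]
    · refine Finset.sum_congr rfl fun a _ => ?_
      rw [himg]
      exact (Finset.card_image_of_injective _ (fun x y h => by simpa using h)).symm
    · intro a _ b _ hab
      simp only [Function.onFun]
      rw [himg, himg, Finset.disjoint_left]
      rintro ⟨x, y⟩ hx hy
      simp only [Finset.mem_image, Prod.mk.injEq] at hx hy
      obtain ⟨x', -, -, h1⟩ := hx
      obtain ⟨y', -, -, h2⟩ := hy
      exact hab (h1.trans h2.symm)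
  -- (F6)  product split
  have PP_succ := PP_succ k
  have PP_succ_disj := PP_succ_disj k
  have F6 : ∏ ij ∈ PP (k+1), (S.image fun f => (f ij.1, f ij.2)).card
      = E * ∏ i : Fin k, e i := by
    rw [PP_succ, Finset.prod_union PP_succ_disj,
      Finset.prod_image (fun a _ b _ h => by
        simpa [Prod.ext_iff, Fin.castSucc_inj] using h),
      Finset.prod_image (fun a _ b _ h => by
        simpa [Prod.ext_iff, Fin.castSucc_inj] using h)]
  -- real part
  have hkR : (0:ℝ) < (k:ℝ) := by exact_mod_cast hk
  have hE0 : (0:ℝ) ≤ (E:ℝ) := Nat.cast_nonneg _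
  have step1 : ∀ a ∈ A, ((Fa a).card : ℝ) ≤ ((E:ℝ) * ∏ i : Fin k, (d i a : ℝ)) ^ ((k:ℝ)⁻¹) := by
    intro a ha
    have hx0 : (0:ℝ) ≤ ((Fa a).card : ℝ) := Nat.cast_nonneg _
    have hpow : ((Fa a).card : ℝ) ^ k ≤ (E:ℝ) * ∏ i : Fin k, (d i a : ℝ) := by
      have h1 : ((Fa a).card : ℝ) ^ (k-1) * ((Fa a).card : ℝ) = ((Fa a).card : ℝ) ^ k := by
        rw [← pow_succ, Nat.sub_add_cancel hk]
      rw [← h1]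
      have c3 : ((Fa a).card : ℝ) ^ (k-1) ≤ (E:ℝ) := by exact_mod_cast F3 a ha
      have c4 : ((Fa a).card : ℝ) ≤ ∏ i : Fin k, (d i a : ℝ) := by exact_mod_cast F4 a ha
      exact mul_le_mul c3 c4 hx0 hE0
    calc ((Fa a).card : ℝ) = (((Fa a).card : ℝ) ^ k) ^ ((k:ℝ)⁻¹) := by
          rw [← Real.rpow_natCast ((Fa a).card : ℝ) k, ← Real.rpow_mul hx0,
            mul_inv_cancel₀ (ne_of_gt hkR), Real.rpow_one]
      _ ≤ ((E:ℝ) * ∏ i : Fin k, (d i a : ℝ)) ^ ((k:ℝ)⁻¹) :=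
          Real.rpow_le_rpow (pow_nonneg hx0 k) hpow (by positivity)
  have step2 : (S.card : ℝ) ≤ ((E:ℝ) * ∏ i : Fin k, (e i : ℝ)) ^ ((k:ℝ)⁻¹) := by
    calc (S.card : ℝ) = ∑ a ∈ A, ((Fa a).card : ℝ) := by rw [F1]; push_cast; rfl
      _ ≤ ∑ a ∈ A, ((E:ℝ) * ∏ i : Fin k, (d i a : ℝ)) ^ ((k:ℝ)⁻¹) :=
          Finset.sum_le_sum step1
      _ = ∑ a ∈ A, (E:ℝ) ^ ((k:ℝ)⁻¹) * ∏ i : Fin k, ((d i a : ℝ)) ^ ((k:ℝ)⁻¹) := by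
          refine Finset.sum_congr rfl fun a _ => ?_
          rw [Real.mul_rpow hE0 (Finset.prod_nonneg fun i _ => Nat.cast_nonneg _),
            ← Real.finset_prod_rpow _ _ (fun i _ => Nat.cast_nonneg _)]
      _ = (E:ℝ) ^ ((k:ℝ)⁻¹) * ∑ a ∈ A, ∏ i : Fin k, ((d i a : ℝ)) ^ ((k:ℝ)⁻¹) := by
          rw [Finset.mul_sum]
      _ ≤ (E:ℝ) ^ ((k:ℝ)⁻¹) * ∏ i : Fin k, (∑ a ∈ A, (d i a : ℝ)) ^ ((k:ℝ)⁻¹) := by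
          refine mul_le_mul_of_nonneg_left ?_ (Real.rpow_nonneg hE0 _)
          have hne : (Finset.univ : Finset (Fin k)).Nonempty :=
            Finset.univ_nonempty_iff.mpr ⟨⟨0, hk⟩⟩
          have := gen_holder A (Finset.univ : Finset (Fin k)) hne
            (fun i a => (d i a : ℝ)) (fun _ _ _ _ => Nat.cast_nonneg _)
          simpa [Finset.card_univ] using this
      _ = (E:ℝ) ^ ((k:ℝ)⁻¹) * ∏ i : Fin k, ((e i : ℝ)) ^ ((k:ℝ)⁻¹) := by
          congr 1
          refine Finset.prod_congr rfl fun i _ => ?_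
          congr 1
          exact_mod_cast congrArg Nat.cast (F5 i)
      _ = ((E:ℝ) * ∏ i : Fin k, (e i : ℝ)) ^ ((k:ℝ)⁻¹) := by
          rw [Real.mul_rpow hE0 (Finset.prod_nonneg fun i _ => Nat.cast_nonneg _),
            ← Real.finset_prod_rpow _ _ (fun i _ => Nat.cast_nonneg _)]
  have hB0 : (0:ℝ) ≤ (E:ℝ) * ∏ i : Fin k, (e i : ℝ) :=
    mul_nonneg hE0 (Finset.prod_nonneg fun _ _ => Nat.cast_nonneg _)
  have final : (S.card : ℝ) ^ k ≤ (E:ℝ) * ∏ i : Fin k, (e i : ℝ) := by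
    have h2 : (((E:ℝ) * ∏ i : Fin k, (e i : ℝ)) ^ ((k:ℝ)⁻¹)) ^ k
        = (E:ℝ) * ∏ i : Fin k, (e i : ℝ) := by
      rw [← Real.rpow_natCast (((E:ℝ) * ∏ i : Fin k, (e i : ℝ)) ^ ((k:ℝ)⁻¹)) k,
        ← Real.rpow_mul hB0, inv_mul_cancel₀ (ne_of_gt hkR), Real.rpow_one]
    rw [← h2]
    exact pow_le_pow_left₀ (Nat.cast_nonneg _) step2 k
  rw [F6]
  exact_mod_cast final

lemma box {V : Type*} [DecidableEq V] :
    ∀ (k : ℕ) (S : Finset (Fin k → V)),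
      S.card ^ (k - 1) ≤ ∏ ij ∈ PP k, (S.image fun f => (f ij.1, f ij.2)).card := by
  intro k
  induction k with
  | zero => intro S; simp [PP]
  | succ k ih =>
    intro S
    rcases Nat.eq_zero_or_pos k with hk | hk
    · subst hk
      have : PP 1 = ∅ := by decide
      simp [this]
    · exact box_step k hk ih S

lemma two_mul_choose_two (k : ℕ) : 2 * k.choose 2 = k * (k - 1) := by
  rcases k with _ | n
  · decide
  · have h2 : 2 ∣ (n+1) * n := by
      rcases Nat.even_mul_succ_self n with ⟨c, hc⟩
      exact ⟨c, by rw [Nat.mul_comm]; omega⟩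
    rw [Nat.choose_two_right]
    simp only [Nat.succ_sub_one]
    exact Nat.mul_div_cancel' h2

/-- If `G` is a `k`-partite graph with `e` edges, the number of transversal copies of `K_k`
in `G` is at most `(e / C(k,2))^{k/2}`. -/
theorem stmt_12 (V : Type*) [Fintype V] (k : ℕ) (hk : 2 ≤ k)
    (G : SimpleGraph V) (p : V → Fin k)
    (hpart : ∀ a b, G.Adj a b → p a ≠ p b) :
    (Set.ncard {s : Finset V | G.IsNClique k s ∧ ∀ i : Fin k, ∃ v ∈ s, p v = i} : ℝ) ≤
      ((G.edgeSet.ncard : ℝ) / (Nat.choose k 2 : ℝ)) ^ ((k : ℝ) / 2) := by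
  classical
  have hrhs0 : (0:ℝ) ≤ (G.edgeSet.ncard : ℝ) / (Nat.choose k 2 : ℝ) := by positivity
  cases isEmpty_or_nonempty V with
  | inl hV =>
    have : {s : Finset V | G.IsNClique k s ∧ ∀ i : Fin k, ∃ v ∈ s, p v = i} = ∅ := by
      ext s
      simp only [Set.mem_setOf_eq, Set.mem_empty_iff_false, iff_false, not_and]
      intro hs
      exfalso
      have h1 : s = (∅ : Finset V) := Finset.eq_empty_of_isEmpty s
      have := hs.card_eq
      rw [h1] at this
      simp at this
      omega
    rw [this]
    simpa using Real.rpow_nonneg hrhs0 _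
  | inr hV =>
    have : Inhabited V := Classical.inhabited_of_nonempty hV
    set Cs := {s : Finset V | G.IsNClique k s ∧ ∀ i : Fin k, ∃ v ∈ s, p v = i} with hCs
    set S : Finset (Fin k → V) := Finset.univ.filter
      (fun f => (∀ i, p (f i) = i) ∧ ∀ i j : Fin k, i ≠ j → G.Adj (f i) (f j)) with hS
    set F : Finset V → (Fin k → V) :=
      fun s i => if h : ∃ v ∈ s, p v = i then h.choose else default with hF
    have hFmem : ∀ s ∈ Cs, ∀ i, F s i ∈ s ∧ p (F s i) = i := by
      intro s hs i
      obtain ⟨-, h2⟩ := hs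
      rw [hF]
      simp only [h2 i, dif_pos]
      exact ⟨(h2 i).choose_spec.1, (h2 i).choose_spec.2⟩
    have hFS : ∀ s ∈ Cs, F s ∈ (S : Set (Fin k → V)) := by
      intro s hs
      simp only [Finset.coe_filter, Set.mem_setOf_eq, hS, Finset.mem_univ, true_and]
      refine ⟨fun i => (hFmem s hs i).2, fun i j hij => ?_⟩
      refine hs.1.1 (Finset.mem_coe.mpr (hFmem s hs i).1) (Finset.mem_coe.mpr (hFmem s hs j).1) ?_
      intro hcon
      exact hij (((hFmem s hs i).2).symm.trans (by rw [hcon, (hFmem s hs j).2]))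
    have hFeq : ∀ s ∈ Cs, s = Finset.image (F s) Finset.univ := by
      intro s hs
      have hinj : Function.Injective (F s) := by
        intro i j hij
        rw [← (hFmem s hs i).2, ← (hFmem s hs j).2, hij]
      have hsub : Finset.image (F s) Finset.univ ⊆ s :=
        Finset.image_subset_iff.mpr (fun i _ => (hFmem s hs i).1)
      refine (Finset.eq_of_subset_of_card_le hsub ?_).symm
      rw [Finset.card_image_of_injective _ hinj, Finset.card_univ, Fintype.card_fin, hs.1.2]
    have claim1 : Set.ncard Cs ≤ S.card := by
      rw [← Set.ncard_coe_finset S]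
      refine Set.ncard_le_ncard_of_injOn F hFS ?_ (Finset.finite_toSet S)
      intro s hs t ht hst
      rw [hFeq s hs, hFeq t ht, hst]
    -- edge counts
    set B : Fin k × Fin k → Finset (V × V) := fun ij => Finset.univ.filter
      (fun ab => G.Adj ab.1 ab.2 ∧ p ab.1 = ij.1 ∧ p ab.2 = ij.2) with hB
    have claim3 : ∀ ij ∈ PP k, (S.image fun f => (f ij.1, f ij.2)).card ≤ (B ij).card := by
      rintro ⟨i, j⟩ hij
      rw [PP, Finset.mem_filter] at hij
      refine Finset.card_le_card ?_
      intro ab hab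
      rw [Finset.mem_image] at hab
      obtain ⟨f, hf, rfl⟩ := hab
      rw [hS, Finset.mem_filter] at hf
      rw [hB, Finset.mem_filter]
      exact ⟨Finset.mem_univ _, hf.2.2 i j (ne_of_lt hij.2), hf.2.1 i, hf.2.1 j⟩
    set Q : Finset (V × V) := Finset.univ.filter
      (fun ab => G.Adj ab.1 ab.2 ∧ p ab.1 < p ab.2) with hQ
    have claim4 : ∑ ij ∈ PP k, (B ij).card ≤ G.edgeFinset.card := by
      have hdisj : ∀ ij ∈ PP k, ∀ i'j' ∈ PP k, ij ≠ i'j' → Disjoint (B ij) (B i'j') := by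
        rintro ij - i'j' - hne
        rw [Finset.disjoint_left]
        intro ab h1 h2
        rw [hB, Finset.mem_filter] at h1 h2
        exact hne (Prod.ext (h1.2.2.1.symm.trans h2.2.2.1) (h1.2.2.2.symm.trans h2.2.2.2))
      rw [← Finset.card_biUnion hdisj]
      have hQsub : (PP k).biUnion B ⊆ Q := by
        intro ab hab
        rw [Finset.mem_biUnion] at hab
        obtain ⟨ij, hij, habij⟩ := hab
        rw [PP, Finset.mem_filter] at hij
        rw [hB, Finset.mem_filter] at habij
        rw [hQ, Finset.mem_filter]
        refine ⟨Finset.mem_univ _, habij.2.1, ?_⟩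
        rw [habij.2.2.1, habij.2.2.2]
        exact hij.2
      refine le_trans (Finset.card_le_card hQsub) ?_
      refine Finset.card_le_card_of_injOn (fun ab => s(ab.1, ab.2)) ?_ ?_
      · intro ab hab
        rw [hQ, Finset.mem_coe, Finset.mem_filter] at hab
        rw [Finset.mem_coe, SimpleGraph.mem_edgeFinset, SimpleGraph.mem_edgeSet]
        exact hab.2.1
      · rintro ⟨a, b⟩ ha ⟨c, d⟩ hc h
        rw [hQ, Finset.coe_filter, Set.mem_setOf_eq] at ha hc
        rcases Sym2.eq_iff.mp h with ⟨rfl, rfl⟩ | ⟨rfl, rfl⟩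
        · rfl
        · exact absurd (ha.2.2.trans hc.2.2) (lt_irrefl _)
    -- AM-GM and finish
    set N : ℕ := k.choose 2 with hN
    have hN1 : 1 ≤ N := Nat.choose_pos hk
    have hNR : (0:ℝ) < (N:ℝ) := by exact_mod_cast hN1
    set m : ℕ := G.edgeFinset.card with hm
    have hsum : ∑ ij ∈ PP k, ((B ij).card : ℝ) ≤ (m:ℝ) := by exact_mod_cast claim4
    have amgm : ∏ ij ∈ PP k, ((B ij).card : ℝ) ≤ ((m:ℝ) / N) ^ N := by
      have h1 : ∏ ij ∈ PP k, ((B ij).card : ℝ) ^ ((N:ℝ)⁻¹) ≤ (m:ℝ) / N := by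
        refine le_trans (Real.geom_mean_le_arith_mean_weighted (PP k) (fun _ => (N:ℝ)⁻¹)
          (fun ij => ((B ij).card : ℝ)) (fun _ _ => by positivity) ?_
          (fun _ _ => Nat.cast_nonneg _)) ?_
        · rw [Finset.sum_const, PP_card, nsmul_eq_mul, ← hN, mul_inv_cancel₀ (ne_of_gt hNR)]
        · rw [← Finset.mul_sum]
          rw [div_eq_inv_mul]
          exact mul_le_mul_of_nonneg_left hsum (by positivity)
      have h2 : ∏ ij ∈ PP k, ((B ij).card : ℝ)
          = (∏ ij ∈ PP k, ((B ij).card : ℝ) ^ ((N:ℝ)⁻¹)) ^ (N:ℕ) := by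
        rw [Real.finset_prod_rpow _ _ (fun _ _ => Nat.cast_nonneg _),
          ← Real.rpow_natCast ((∏ ij ∈ PP k, ((B ij).card : ℝ)) ^ ((N:ℝ)⁻¹)) N,
          ← Real.rpow_mul (Finset.prod_nonneg fun _ _ => Nat.cast_nonneg _),
          inv_mul_cancel₀ (ne_of_gt hNR), Real.rpow_one]
      rw [h2]
      exact pow_le_pow_left₀ (Finset.prod_nonneg fun _ _ =>
        Real.rpow_nonneg (Nat.cast_nonneg _) _) h1 N
    have hbox : (S.card : ℝ) ^ (k-1) ≤ ((m:ℝ) / N) ^ N := by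
      refine le_trans ?_ amgm
      have := le_trans (box k S) (Finset.prod_le_prod (fun _ _ => Nat.zero_le _) claim3)
      exact_mod_cast this
    -- convert to rpow inequality
    have hk1R : (0:ℝ) < ((k-1 : ℕ):ℝ) := by
      have : 1 ≤ k - 1 := by omega
      exact_mod_cast this
    have hSle : (S.card : ℝ) ≤ ((m:ℝ) / N) ^ ((k:ℝ)/2) := by
      have hexp : ((N:ℕ):ℝ) * (((k-1:ℕ):ℝ))⁻¹ = (k:ℝ)/2 := by
        have h2N : ((2 * N : ℕ) : ℝ) = ((k * (k-1) : ℕ) : ℝ) := by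
          rw [two_mul_choose_two]
        push_cast [Nat.cast_mul] at h2N
        have hNval : ((N:ℕ):ℝ) = (k:ℝ) * ((k-1:ℕ):ℝ) / 2 := by linarith
        rw [hNval, div_mul_eq_mul_div, mul_assoc, mul_inv_cancel₀ (ne_of_gt hk1R), mul_one]
      calc (S.card : ℝ) = ((S.card : ℝ) ^ (k-1 : ℕ)) ^ (((k-1:ℕ):ℝ))⁻¹ := by
            rw [← Real.rpow_natCast ((S.card : ℝ)) (k-1), ← Real.rpow_mul (Nat.cast_nonneg _),
              mul_inv_cancel₀ (ne_of_gt hk1R), Real.rpow_one]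
        _ ≤ (((m:ℝ) / N) ^ (N:ℕ)) ^ (((k-1:ℕ):ℝ))⁻¹ :=
            Real.rpow_le_rpow (pow_nonneg (Nat.cast_nonneg _) _) hbox (by positivity)
        _ = ((m:ℝ) / N) ^ ((k:ℝ)/2) := by
            rw [← Real.rpow_natCast ((m:ℝ)/N) N, ← Real.rpow_mul (by positivity), hexp]
    have hmEq : (G.edgeSet.ncard : ℝ) = (m:ℝ) := by
      rw [hm, ← SimpleGraph.coe_edgeFinset, Set.ncard_coe_finset]
    rw [hmEq]
    refine le_trans ?_ hSle
    exact_mod_cast claim1
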